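/- Let ρ be a density matrix on ℂ^m ⊗ ℂ^n such that the partial trace Tr_B(ρ) is a pure state, i.e. a rank-one projection. Then ρ factorizes as ρ = Tr_B(ρ) ⊗ Tr_A(ρ). In particular, a subsystem in a pure (maximally entangled within itself) state is separable from, and uncorrelated with, the remainder of the total system. -/

import Mathlib

open Matrix Kronecker
open scoped ComplexOrder

noncomputable section

/-- A density matrix: positive semidefinite with unit trace. -/
def IsDensityMatrix {d : Type*} [Fintype d] [DecidableEq d] (ρ : Matrix d d ℂ) : Prop :=
  ρ.PosSemidef ∧ ρ.trace = 1

/-- A matrix is a pure state if it is the rank-one projection `|ψ⟩⟨ψ|` onto a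
unit vector `ψ`. -/
def IsPureState {d : Type*} [Fintype d] [DecidableEq d] (ρ : Matrix d d ℂ) : Prop :=
  ∃ ψ : d → ℂ, (∑ i, ‖ψ i‖ ^ 2 = 1) ∧ ρ = Matrix.vecMulVec ψ (star ψ)

/-- Partial trace over the second tensor factor. -/
def ptraceB {m n : ℕ} (M : Matrix (Fin m × Fin n) (Fin m × Fin n) ℂ) :
    Matrix (Fin m) (Fin m) ℂ :=
  Matrix.of fun i i' => ∑ j, M (i, j) (i', j)

/-- Partial trace over the first tensor factor. -/
def ptraceA {m n : ℕ} (M : Matrix (Fin m × Fin n) (Fin m × Fin n) ℂ) :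
    Matrix (Fin n) (Fin n) ℂ :=
  Matrix.of fun j j' => ∑ i, M (i, j) (i, j')

/-- If the marginal `Tr_B(ρ)` of a density matrix `ρ` is a pure state, then the
joint state factorizes: `ρ = Tr_B(ρ) ⊗ Tr_A(ρ)`. -/
theorem pure_marginal_implies_product {m n : ℕ}
    (ρ : Matrix (Fin m × Fin n) (Fin m × Fin n) ℂ)
    (hρ : IsDensityMatrix ρ) (hpure : IsPureState (ptraceB ρ)) :
    ρ = (ptraceB ρ) ⊗ₖ (ptraceA ρ) := by
  obtain ⟨hpsd, htr⟩ := hρ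
  obtain ⟨ψ, hψ, hB⟩ := hpure
  -- the embedding of an A-vector into the j-th B-slot
  have key : ∀ (φ : Fin m → ℂ), (∑ l, (starRingEnd ℂ) (ψ l) * φ l) = 0 →
      ∀ j, ρ *ᵥ (fun p => if p.2 = j then φ p.1 else 0) = 0 := by
    intro φ hφ j
    set v : Fin n → (Fin m × Fin n → ℂ) :=
      fun j p => if p.2 = j then φ p.1 else 0 with hv
    have hform : ∀ j, star (v j) ⬝ᵥ ρ *ᵥ (v j)
        = ∑ l, ∑ l', (starRingEnd ℂ) (φ l) * (ρ (l, j) (l', j) * φ l') := by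
      intro j
      simp only [dotProduct, mulVec, Fintype.sum_prod_type, hv, Pi.star_apply,
        Complex.star_def, apply_ite (starRingEnd ℂ), map_zero, ite_mul, mul_ite,
        zero_mul, mul_zero, Finset.sum_ite_eq', Finset.mem_univ, if_true,
        Finset.mul_sum, Finset.sum_ite_eq]
      refine Finset.sum_congr rfl fun l _ => ?_
      rw [Finset.sum_comm]
      simp [Finset.sum_ite_eq']
    have hsum : ∑ j, star (v j) ⬝ᵥ ρ *ᵥ (v j) = 0 := by
      have h2 : ∑ j, star (v j) ⬝ᵥ ρ *ᵥ (v j)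
          = ∑ l, ∑ l', (starRingEnd ℂ) (φ l) * ((ptraceB ρ) l l' * φ l') := by
        simp only [hform, ptraceB, of_apply]
        rw [Finset.sum_comm]
        refine Finset.sum_congr rfl fun l _ => ?_
        rw [Finset.sum_comm]
        refine Finset.sum_congr rfl fun l' _ => ?_
        rw [Finset.sum_mul, Finset.mul_sum]
      rw [h2, hB]
      simp only [vecMulVec_apply, Pi.star_apply, Complex.star_def]
      have h3 : ∑ l, ∑ l', (starRingEnd ℂ) (φ l) * (ψ l * (starRingEnd ℂ) (ψ l') * φ l')
          = (∑ l, (starRingEnd ℂ) (φ l) * ψ l) * ∑ l', (starRingEnd ℂ) (ψ l') * φ l' := by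
        rw [Finset.sum_mul]
        refine Finset.sum_congr rfl fun l _ => ?_
        rw [Finset.mul_sum]
        exact Finset.sum_congr rfl fun l' _ => by ring
      rw [h3, hφ, mul_zero]
    have hz : star (v j) ⬝ᵥ ρ *ᵥ (v j) = 0 := by
      have hnonneg : ∀ j' ∈ Finset.univ, (0:ℂ) ≤ star (v j') ⬝ᵥ ρ *ᵥ (v j') :=
        fun j' _ => hpsd.dotProduct_mulVec_nonneg (v j')
      exact (Finset.sum_eq_zero_iff_of_nonneg hnonneg).mp hsum j (Finset.mem_univ j)
    exact (hpsd.dotProduct_mulVec_zero_iff _).mp hz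
  -- relation R1
  have R1 : ∀ (x : Fin m × Fin n) (k k' : Fin m) (j : Fin n),
      (starRingEnd ℂ) (ψ k') * ρ x (k, j) = (starRingEnd ℂ) (ψ k) * ρ x (k', j) := by
    intro x k k' j
    have hφ : (∑ l, (starRingEnd ℂ) (ψ l) *
        ((starRingEnd ℂ) (ψ k') * (if l = k then 1 else 0)
          - (starRingEnd ℂ) (ψ k) * (if l = k' then 1 else 0))) = 0 := by
      simp only [mul_sub, mul_ite, mul_one, mul_zero]
      rw [Finset.sum_sub_distrib]
      simp [Finset.sum_ite_eq', mul_comm]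
    have h0 := congrFun (key (fun l =>
      (starRingEnd ℂ) (ψ k') * (if l = k then 1 else 0)
        - (starRingEnd ℂ) (ψ k) * (if l = k' then 1 else 0)) hφ j) x
    simp only [mulVec, dotProduct, Fintype.sum_prod_type, Pi.zero_apply, mul_sub, mul_ite,
      mul_one, mul_zero, ite_mul, zero_mul, sub_zero, zero_sub,
      Finset.sum_ite_eq', Finset.mem_univ, if_true, Finset.sum_sub_distrib] at h0
    linear_combination h0
  -- Hermitian adjoint relation R2
  have hconj : ∀ (x y : Fin m × Fin n), (starRingEnd ℂ) (ρ x y) = ρ y x := by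
    intro x y
    have := congrFun (congrFun hpsd.1 y) x
    simpa [conjTranspose_apply] using this
  have R2 : ∀ (y : Fin m × Fin n) (k k' : Fin m) (j : Fin n),
      ψ k' * ρ (k, j) y = ψ k * ρ (k', j) y := by
    intro y k k' j
    have := congrArg (starRingEnd ℂ) (R1 y k k' j)
    simpa only [_root_.map_mul, hconj, Complex.conj_conj] using this
  -- norm of ψ is 1
  have hnorm : (∑ k, ψ k * (starRingEnd ℂ) (ψ k)) = 1 := by
    have h4 : ∀ k, ψ k * (starRingEnd ℂ) (ψ k) = ((‖ψ k‖ ^ 2 : ℝ) : ℂ) := by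
      intro k
      rw [Complex.mul_conj]
      norm_cast
      rw [Complex.normSq_eq_norm_sq]
    simp_rw [h4]
    rw [← Complex.ofReal_sum, hψ, Complex.ofReal_one]
  -- final computation
  ext ⟨i, j⟩ ⟨i', j'⟩
  rw [kroneckerMap_apply, hB]
  simp only [vecMulVec_apply, Pi.star_apply, Complex.star_def, ptraceA, of_apply]
  have step : ∀ k, ψ i * (starRingEnd ℂ) (ψ i') * ρ (k, j) (k, j')
      = (ψ k * (starRingEnd ℂ) (ψ k)) * ρ (i, j) (i', j') := by
    intro k
    have h1 : (starRingEnd ℂ) (ψ i') * ρ (k, j) (k, j')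
        = (starRingEnd ℂ) (ψ k) * ρ (k, j) (i', j') := R1 (k, j) k i' j'
    have h2 : ψ i * ρ (k, j) (i', j') = ψ k * ρ (i, j) (i', j') := R2 (i', j') k i j
    calc ψ i * (starRingEnd ℂ) (ψ i') * ρ (k, j) (k, j')
        = ψ i * ((starRingEnd ℂ) (ψ i') * ρ (k, j) (k, j')) := by ring
      _ = ψ i * ((starRingEnd ℂ) (ψ k) * ρ (k, j) (i', j')) := by rw [h1]
      _ = (starRingEnd ℂ) (ψ k) * (ψ i * ρ (k, j) (i', j')) := by ring
      _ = (starRingEnd ℂ) (ψ k) * (ψ k * ρ (i, j) (i', j')) := by rw [h2]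
      _ = (ψ k * (starRingEnd ℂ) (ψ k)) * ρ (i, j) (i', j') := by ring
  calc ρ (i, j) (i', j')
      = (∑ k, ψ k * (starRingEnd ℂ) (ψ k)) * ρ (i, j) (i', j') := by rw [hnorm, one_mul]
    _ = ∑ k, (ψ k * (starRingEnd ℂ) (ψ k)) * ρ (i, j) (i', j') := by rw [Finset.sum_mul]
    _ = ∑ k, ψ i * (starRingEnd ℂ) (ψ i') * ρ (k, j) (k, j') :=
        Finset.sum_congr rfl fun k _ => (step k).symm
    _ = ψ i * (starRingEnd ℂ) (ψ i') * ∑ k, ρ (k, j) (k, j') := by rw [Finset.mul_sum]
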